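/- Let n ≥ 1 and k ≥ 2 be integers. Let ℒ_{n,k} be the family of all non-empty subsets A of [n] × [k] such that no two distinct elements of A have the same first coordinate. For (i,j) ∈ [n] × {2, ..., k}, define δ_{i,j} : ℒ_{n,k} → ℒ_{n,k} by δ_{i,j}(A) = (A \ {(i,j)}) ∪ {(i,1)} if (i,j) ∈ A, and δ_{i,j}(A) = A otherwise; and define the compression Δ_{i,j} on subfamilies of ℒ_{n,k} by Δ_{i,j}(𝒜) = {δ_{i,j}(A) : A ∈ 𝒜} ∪ {A ∈ 𝒜 : δ_{i,j}(A) ∈ 𝒜}. Let 𝒜 be an intersecting subfamily of ℒ_{n,k} and let 𝒜* = Δ_{n,k} ∘ ... ∘ Δ_{n,2} ∘ ... ∘ Δ_{1,k} ∘ ... ∘ Δ_{1,2}(𝒜) (that is, the result of applying the compressions Δ_{i,j} for i = 1, ..., n in increasing order of i, and for each i applying Δ_{i,2}, ..., Δ_{i,k} in increasing order of j). Then for any A, B ∈ 𝒜*, we have A ∩ B ∩ ([n] × {1}) ≠ ∅. -/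

import Mathlib

/-- `ℒ_{n,k}`: the family of all non-empty subsets of `[n] × [k]` in which no two
distinct elements have the same first coordinate. -/
def labelledFamily (n k : ℕ) : Finset (Finset (ℕ × ℕ)) :=
  ((Finset.Icc 1 n) ×ˢ (Finset.Icc 1 k)).powerset.filter
    (fun A => A.Nonempty ∧ ∀ p ∈ A, ∀ q ∈ A, p.1 = q.1 → p = q)

/-- The elementary compression `δ_{i,j}` replacing `(i,j)` by `(i,1)`. -/
def delta (i j : ℕ) (A : Finset (ℕ × ℕ)) : Finset (ℕ × ℕ) :=
  if (i, j) ∈ A then insert (i, 1) (A.erase (i, j)) else A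

/-- The compression operation `Δ_{i,j}` on families. -/
def Delta (i j : ℕ) (𝒜 : Finset (Finset (ℕ × ℕ))) : Finset (Finset (ℕ × ℕ)) :=
  𝒜.image (delta i j) ∪ 𝒜.filter (fun A => delta i j A ∈ 𝒜)

/-- The list of index pairs `(i, j)` for `i = 1, …, n` in increasing order of `i`,
and for each `i` the values `j = 2, …, k` in increasing order of `j`; applying the
compressions in this order (leftmost first) yields
`𝒜* = Δ_{n,k} ∘ ⋯ ∘ Δ_{n,2} ∘ ⋯ ∘ Δ_{1,k} ∘ ⋯ ∘ Δ_{1,2}(𝒜)`. -/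
def compressionOrder (n k : ℕ) : List (ℕ × ℕ) :=
  (List.range n).flatMap (fun i => (List.range (k - 1)).map (fun j => (i + 1, j + 2)))

open Finset

lemma mem_labelledFamily {n k : ℕ} {A : Finset (ℕ × ℕ)} :
    A ∈ labelledFamily n k ↔
      A ⊆ (Finset.Icc 1 n) ×ˢ (Finset.Icc 1 k) ∧ A.Nonempty ∧
      ∀ p ∈ A, ∀ q ∈ A, p.1 = q.1 → p = q := by
  simp [labelledFamily, and_assoc]

lemma mem_delta {i j : ℕ} {A : Finset (ℕ × ℕ)} {x : ℕ × ℕ} :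
    x ∈ delta i j A ↔ (x = (i, 1) ∧ (i, j) ∈ A) ∨ (x ∈ A ∧ x ≠ (i, j)) := by
  unfold delta
  split_ifs with h
  · simp only [Finset.mem_insert, Finset.mem_erase]
    constructor
    · rintro (rfl | ⟨hne, hx⟩)
      · exact Or.inl ⟨rfl, h⟩
      · exact Or.inr ⟨hx, hne⟩
    · rintro (⟨rfl, _⟩ | ⟨hx, hne⟩)
      · exact Or.inl rfl
      · exact Or.inr ⟨hne, hx⟩
  · constructor
    · intro hx
      refine Or.inr ⟨hx, ?_⟩
      rintro rfl; exact h hx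
    · rintro (⟨rfl, hx⟩ | ⟨hx, _⟩)
      · exact absurd hx h
      · exact hx

lemma not_mem_delta {i j : ℕ} (hj : j ≠ 1) (A : Finset (ℕ × ℕ)) :
    (i, j) ∉ delta i j A := by
  rw [mem_delta]
  rintro (⟨h, -⟩ | ⟨-, h⟩)
  · exact hj (congrArg Prod.snd h)
  · exact h rfl

lemma delta_idem {i j : ℕ} (hj : j ≠ 1) (A : Finset (ℕ × ℕ)) :
    delta i j (delta i j A) = delta i j A := by
  unfold delta
  rw [if_neg]
  exact not_mem_delta hj A

lemma delta_eq_of_not_mem {i j : ℕ} {A : Finset (ℕ × ℕ)} (h : (i, j) ∉ A) :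
    delta i j A = A := if_neg h

lemma delta_mem_labelledFamily {n k i j : ℕ} (hi1 : 1 ≤ i) (hin : i ≤ n) (hk : 1 ≤ k)
    {A : Finset (ℕ × ℕ)} (hA : A ∈ labelledFamily n k) :
    delta i j A ∈ labelledFamily n k := by
  rw [mem_labelledFamily] at hA ⊢
  obtain ⟨hsub, hne, hpf⟩ := hA
  by_cases h : (i, j) ∈ A
  · unfold delta
    rw [if_pos h]
    refine ⟨?_, ⟨(i, 1), mem_insert_self _ _⟩, ?_⟩
    · intro x hx
      rcases Finset.mem_insert.1 hx with rfl | hx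
      · simp only [Finset.mem_product, Finset.mem_Icc]
        exact ⟨⟨hi1, hin⟩, le_refl 1, hk⟩
      · exact hsub (Finset.mem_of_mem_erase hx)
    · intro p hp q hq hpq
      rcases Finset.mem_insert.1 hp with rfl | hp <;>
        rcases Finset.mem_insert.1 hq with rfl | hq
      · rfl
      · exfalso
        have hq' := Finset.mem_erase.1 hq
        have := hpf q hq'.2 (i, j) h (by simpa using hpq.symm)
        exact hq'.1 this
      · exfalso
        have hp' := Finset.mem_erase.1 hp
        have := hpf p hp'.2 (i, j) h (by simpa using hpq)
        exact hp'.1 this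
      · exact hpf p (Finset.mem_of_mem_erase hp) q (Finset.mem_of_mem_erase hq) hpq
  · rw [delta_eq_of_not_mem h]
    exact ⟨hsub, hne, hpf⟩

set_option maxHeartbeats 1600000 in
lemma delta_comm {a b c d : ℕ} (hb : b ≠ 1) (hd : d ≠ 1)
    (A : Finset (ℕ × ℕ)) :
    delta a b (delta c d A) = delta c d (delta a b A) := by
  by_cases hne : ((a : ℕ), (b : ℕ)) = (c, d)
  · simp only [Prod.mk.injEq] at hne
    obtain ⟨rfl, rfl⟩ := hne
    rfl
  have h1 : (a, b) ∈ delta c d A ↔ (a, b) ∈ A := by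
    rw [mem_delta]
    constructor
    · rintro (⟨h, -⟩ | ⟨h, -⟩)
      · exact absurd (congrArg Prod.snd h) hb
      · exact h
    · intro h
      exact Or.inr ⟨h, hne⟩
  have h2 : (c, d) ∈ delta a b A ↔ (c, d) ∈ A := by
    rw [mem_delta]
    constructor
    · rintro (⟨h, -⟩ | ⟨h, -⟩)
      · exact absurd (congrArg Prod.snd h) hd
      · exact h
    · intro h
      exact Or.inr ⟨h, Ne.symm hne⟩
  ext x
  have f1 : x = ((a : ℕ), (1 : ℕ)) → x ≠ (c, d) := by
    rintro rfl h
    exact hd (congrArg Prod.snd h).symm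
  have f2 : x = ((c : ℕ), (1 : ℕ)) → x ≠ (a, b) := by
    rintro rfl h
    exact hb (congrArg Prod.snd h).symm
  simp only [mem_delta, h1, h2]
  tauto

lemma mem_Delta {i j : ℕ} {ℱ : Finset (Finset (ℕ × ℕ))} {B : Finset (ℕ × ℕ)} :
    B ∈ Delta i j ℱ ↔ (∃ A ∈ ℱ, delta i j A = B) ∨ (B ∈ ℱ ∧ delta i j B ∈ ℱ) := by
  simp [Delta]

lemma Delta_closed_self {i j : ℕ} (hj : j ≠ 1) {ℱ : Finset (Finset (ℕ × ℕ))} :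
    ∀ A ∈ Delta i j ℱ, delta i j A ∈ Delta i j ℱ := by
  intro A hA
  rcases mem_Delta.1 hA with ⟨C, hC, rfl⟩ | ⟨hB, _⟩
  · rw [delta_idem hj]
    exact hA
  · exact mem_Delta.2 (Or.inl ⟨A, hB, rfl⟩)

lemma Delta_closed_of_closed {a b c d : ℕ} (hb : b ≠ 1) (hd : d ≠ 1)
    {ℱ : Finset (Finset (ℕ × ℕ))}
    (hcl : ∀ A ∈ ℱ, delta c d A ∈ ℱ) :
    ∀ A ∈ Delta a b ℱ, delta c d A ∈ Delta a b ℱ := by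
  intro A hA
  rcases mem_Delta.1 hA with ⟨C, hC, rfl⟩ | ⟨hAℱ, hdA⟩
  · rw [delta_comm hd hb]
    exact mem_Delta.2 (Or.inl ⟨delta c d C, hcl C hC, rfl⟩)
  · refine mem_Delta.2 (Or.inr ⟨hcl A hAℱ, ?_⟩)
    rw [delta_comm hb hd]
    exact hcl _ hdA

lemma Delta_subset {n k i j : ℕ} (hi1 : 1 ≤ i) (hin : i ≤ n) (hk : 1 ≤ k)
    {ℱ : Finset (Finset (ℕ × ℕ))} (hsub : ℱ ⊆ labelledFamily n k) :
    Delta i j ℱ ⊆ labelledFamily n k := by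
  intro B hB
  rcases mem_Delta.1 hB with ⟨A, hA, rfl⟩ | ⟨hB, _⟩
  · exact delta_mem_labelledFamily hi1 hin hk (hsub hA)
  · exact hsub hB

lemma Delta_intersecting {n k i j : ℕ} (hj : j ≠ 1)
    {ℱ : Finset (Finset (ℕ × ℕ))} (hsub : ℱ ⊆ labelledFamily n k)
    (hint : ∀ A ∈ ℱ, ∀ B ∈ ℱ, (A ∩ B).Nonempty) :
    ∀ A ∈ Delta i j ℱ, ∀ B ∈ Delta i j ℱ, (A ∩ B).Nonempty := by
  have key : ∀ A ∈ ℱ, ∀ B ∈ ℱ, delta i j B ∈ ℱ → (delta i j A ∩ B).Nonempty := by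
    intro A hA B hB hdB
    by_cases h : (i, j) ∈ A
    · obtain ⟨q, hq⟩ := hint A hA (delta i j B) hdB
      rw [mem_inter] at hq
      obtain ⟨hqA, hqdB⟩ := hq
      have hpfA := (mem_labelledFamily.1 (hsub hA)).2.2
      have hq1 : q ≠ (i, 1) := by
        rintro rfl
        exact hj (congrArg Prod.snd (hpfA (i, 1) hqA (i, j) h rfl)).symm
      rcases mem_delta.1 hqdB with ⟨rfl, -⟩ | ⟨hqB, hqne⟩
      · exact absurd rfl hq1
      · exact ⟨q, mem_inter.2 ⟨mem_delta.2 (Or.inr ⟨hqA, hqne⟩), hqB⟩⟩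
    · rw [delta_eq_of_not_mem h]
      exact hint A hA B hB
  intro A' hA' B' hB'
  rcases mem_Delta.1 hA' with ⟨A, hA, rfl⟩ | ⟨hA, hdA⟩ <;>
    rcases mem_Delta.1 hB' with ⟨B, hB, rfl⟩ | ⟨hB, hdB⟩
  · obtain ⟨x, hx⟩ := hint A hA B hB
    rw [mem_inter] at hx
    by_cases hxe : x = (i, j)
    · subst hxe
      exact ⟨(i, 1), mem_inter.2 ⟨mem_delta.2 (Or.inl ⟨rfl, hx.1⟩),
        mem_delta.2 (Or.inl ⟨rfl, hx.2⟩)⟩⟩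
    · exact ⟨x, mem_inter.2 ⟨mem_delta.2 (Or.inr ⟨hx.1, hxe⟩),
        mem_delta.2 (Or.inr ⟨hx.2, hxe⟩)⟩⟩
  · exact key A hA B' hB hdB
  · obtain ⟨x, hx⟩ := key B hB A' hA hdA
    rw [mem_inter] at hx
    exact ⟨x, mem_inter.2 ⟨hx.2, hx.1⟩⟩
  · exact hint A' hA B' hB

lemma fold_invariant {n k : ℕ} (hk : 1 ≤ k) :
    ∀ (l : List (ℕ × ℕ)), (∀ p ∈ l, 1 ≤ p.1 ∧ p.1 ≤ n ∧ 2 ≤ p.2) →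
    ∀ (C : ℕ × ℕ → Prop), (∀ q, C q → 2 ≤ q.2) →
    ∀ (ℱ : Finset (Finset (ℕ × ℕ))), ℱ ⊆ labelledFamily n k →
      (∀ A ∈ ℱ, ∀ B ∈ ℱ, (A ∩ B).Nonempty) →
      (∀ q, C q → ∀ A ∈ ℱ, delta q.1 q.2 A ∈ ℱ) →
      (l.foldl (fun ℱ p => Delta p.1 p.2 ℱ) ℱ) ⊆ labelledFamily n k ∧
      (∀ A ∈ l.foldl (fun ℱ p => Delta p.1 p.2 ℱ) ℱ,
        ∀ B ∈ l.foldl (fun ℱ p => Delta p.1 p.2 ℱ) ℱ, (A ∩ B).Nonempty) ∧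
      (∀ q, C q ∨ q ∈ l → ∀ A ∈ l.foldl (fun ℱ p => Delta p.1 p.2 ℱ) ℱ,
        delta q.1 q.2 A ∈ l.foldl (fun ℱ p => Delta p.1 p.2 ℱ) ℱ) := by
  intro l
  induction l with
  | nil =>
    intro _ C _ ℱ hsub hint hcl
    refine ⟨hsub, hint, ?_⟩
    rintro q (hq | hq)
    · exact hcl q hq
    · simp at hq
  | cons p l ih =>
    intro hgood C hCgood ℱ hsub hint hcl
    have hp := hgood p List.mem_cons_self
    have hp2 : p.2 ≠ 1 := by omega
    simp only [List.foldl_cons]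
    have hsub' : Delta p.1 p.2 ℱ ⊆ labelledFamily n k :=
      Delta_subset hp.1 hp.2.1 hk hsub
    have hint' := Delta_intersecting (n := n) (k := k) (i := p.1) hp2 hsub hint
    obtain ⟨h1, h2, h3⟩ := ih (fun q hq => hgood q (List.mem_cons_of_mem p hq))
      (fun q => C q ∨ q = p)
      (fun q hq => hq.elim (hCgood q) (fun h => h ▸ hp.2.2))
      (Delta p.1 p.2 ℱ) hsub' hint'
      (by
        rintro q (hq | rfl)
        · exact Delta_closed_of_closed hp2 (by have := hCgood q hq; omega)
            (hcl q hq)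
        · exact Delta_closed_self hp2)
    refine ⟨h1, h2, ?_⟩
    rintro q (hq | hq)
    · exact h3 q (Or.inl (Or.inl hq))
    · rcases List.mem_cons.1 hq with rfl | hq
      · exact h3 q (Or.inl (Or.inr rfl))
      · exact h3 q (Or.inr hq)

lemma mem_compressionOrder {n k i j : ℕ} :
    (i, j) ∈ compressionOrder n k ↔ 1 ≤ i ∧ i ≤ n ∧ 2 ≤ j ∧ j ≤ k := by
  simp only [compressionOrder, List.mem_flatMap, List.mem_map, List.mem_range,
    Prod.mk.injEq]
  constructor
  · rintro ⟨a, ha, b, hb, rfl, rfl⟩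
    omega
  · rintro ⟨h1, h2, h3, h4⟩
    exact ⟨i - 1, by omega, ⟨j - 2, by omega, by omega, by omega⟩⟩

lemma final_step {n k : ℕ}
    {ℱ : Finset (Finset (ℕ × ℕ))} (hsub : ℱ ⊆ labelledFamily n k)
    (hint : ∀ A ∈ ℱ, ∀ B ∈ ℱ, (A ∩ B).Nonempty)
    (hcl : ∀ i j, 1 ≤ i → i ≤ n → 2 ≤ j → j ≤ k → ∀ A ∈ ℱ, delta i j A ∈ ℱ) :
    ∀ A ∈ ℱ, ∀ B ∈ ℱ,
      (A ∩ B ∩ ((Finset.Icc 1 n) ×ˢ ({1} : Finset ℕ))).Nonempty := by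
  intro A hA B hB
  suffices H : ∀ m A, A ∈ ℱ → ((A ∩ B).filter (fun x => x.2 ≠ 1)).card ≤ m →
      (A ∩ B ∩ ((Finset.Icc 1 n) ×ˢ ({1} : Finset ℕ))).Nonempty by
    exact H _ A hA le_rfl
  intro m
  induction m with
  | zero =>
    intro A hA hcard
    obtain ⟨x, hx⟩ := hint A hA B hB
    have hx2 : x.2 = 1 := by
      by_contra h
      have : x ∈ (A ∩ B).filter (fun x => x.2 ≠ 1) := mem_filter.2 ⟨hx, h⟩
      have := card_pos.2 ⟨x, this⟩
      omega
    have hxA := (mem_inter.1 hx).1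
    have hxIcc := (mem_labelledFamily.1 (hsub hA)).1 hxA
    rw [mem_product, mem_Icc] at hxIcc
    refine ⟨x, mem_inter.2 ⟨hx, ?_⟩⟩
    rw [mem_product, mem_singleton]
    exact ⟨by rw [mem_Icc]; exact hxIcc.1, hx2⟩
  | succ m ihm =>
    intro A hA hcard
    by_cases hex : ∃ x ∈ A ∩ B, x.2 = 1
    · obtain ⟨x, hx, hx2⟩ := hex
      have hxA := (mem_inter.1 hx).1
      have hxIcc := (mem_labelledFamily.1 (hsub hA)).1 hxA
      rw [mem_product, mem_Icc] at hxIcc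
      refine ⟨x, mem_inter.2 ⟨hx, ?_⟩⟩
      rw [mem_product, mem_singleton]
      exact ⟨by rw [mem_Icc]; exact hxIcc.1, hx2⟩
    · push_neg at hex
      obtain ⟨x, hx⟩ := hint A hA B hB
      obtain ⟨i, j⟩ := x
      have hj : j ≠ 1 := hex _ hx
      have hxA := (mem_inter.1 hx).1
      have hxB := (mem_inter.1 hx).2
      have hxIcc := (mem_labelledFamily.1 (hsub hA)).1 hxA
      rw [mem_product, mem_Icc, mem_Icc] at hxIcc
      have hA' : delta i j A ∈ ℱ :=
        hcl i j hxIcc.1.1 hxIcc.1.2 (by omega) hxIcc.2.2 A hA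
      have hxf : ((i, j) : ℕ × ℕ) ∈ (A ∩ B).filter (fun x => x.2 ≠ 1) :=
        mem_filter.2 ⟨hx, hj⟩
      have hsubset : (delta i j A ∩ B).filter (fun x => x.2 ≠ 1) ⊆
          ((A ∩ B).filter (fun x => x.2 ≠ 1)).erase (i, j) := by
        intro y hy
        rw [mem_filter, mem_inter] at hy
        obtain ⟨⟨hyA', hyB⟩, hy2⟩ := hy
        rcases mem_delta.1 hyA' with ⟨rfl, -⟩ | ⟨hyA, hyne⟩
        · exact absurd rfl hy2
        · exact mem_erase.2 ⟨hyne, mem_filter.2 ⟨mem_inter.2 ⟨hyA, hyB⟩, hy2⟩⟩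
      have hcard' : ((delta i j A ∩ B).filter (fun x => x.2 ≠ 1)).card ≤ m := by
        have := card_le_card hsubset
        rw [card_erase_of_mem hxf] at this
        have hpos := card_pos.2 ⟨_, hxf⟩
        omega
      obtain ⟨y, hy⟩ := ihm (delta i j A) hA' hcard'
      rw [mem_inter, mem_inter] at hy
      obtain ⟨⟨hyA', hyB⟩, hyP⟩ := hy
      rcases mem_delta.1 hyA' with ⟨rfl, -⟩ | ⟨hyA, -⟩
      · exfalso
        have hpfB := (mem_labelledFamily.1 (hsub hB)).2.2
        have := hpfB (i, 1) hyB (i, j) hxB rfl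
        exact hj (congrArg Prod.snd this).symm
      · exact ⟨y, mem_inter.2 ⟨mem_inter.2 ⟨hyA, hyB⟩, hyP⟩⟩

theorem compressed_family_intersects_on_first_level
    (n k : ℕ) (hn : 1 ≤ n) (hk : 2 ≤ k)
    (𝒜 : Finset (Finset (ℕ × ℕ)))
    (h𝒜 : 𝒜 ⊆ labelledFamily n k)
    (hint : ∀ A ∈ 𝒜, ∀ B ∈ 𝒜, (A ∩ B).Nonempty) :
    ∀ A ∈ (compressionOrder n k).foldl (fun ℱ p => Delta p.1 p.2 ℱ) 𝒜,
      ∀ B ∈ (compressionOrder n k).foldl (fun ℱ p => Delta p.1 p.2 ℱ) 𝒜,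
        (A ∩ B ∩ ((Finset.Icc 1 n) ×ˢ ({1} : Finset ℕ))).Nonempty := by
  obtain ⟨h1, h2, h3⟩ := fold_invariant (n := n) (k := k) (by omega)
    (compressionOrder n k)
    (by
      intro p hp
      obtain ⟨i, j⟩ := p
      have := mem_compressionOrder.1 hp
      exact ⟨this.1, this.2.1, this.2.2.1⟩)
    (fun _ => False) (by simp)
    𝒜 h𝒜 hint (by simp)
  exact final_step h1 h2
    (fun i j hi1 hin hj2 hjk =>
      h3 (i, j) (Or.inr (mem_compressionOrder.2 ⟨hi1, hin, hj2, hjk⟩)))
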